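/- Let n be a positive integer and r ≥ β ≥ 0 real numbers such that N = 2^{nr}, M = 2^{n(r−β)}, and L = 2^{2nβ} are positive integers with M ≤ N. Let ℳ̃ and ℳ be finite sets with |ℳ̃| = M and |ℳ| = N, and let G₁, …, G_L be independent random variables, each uniformly distributed over the set of injective maps from ℳ̃ to ℳ. Let γ = (4r + 2)·ln 2 / (2 ln 2 − 1). Then Pr( there exist distinct m, m' ∈ ℳ with |{ j ∈ {1,…,L} : {m, m'} ⊆ range(G_j) }| > γn ) ≤ e^{−1}·2^{−2(n(r+1)−1)}. -/

import Mathlib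

open scoped BigOperators Classical
open Finset

noncomputable section



lemma aux_perm {α : Type} {m m' μ μ' : α} (h : m ≠ m') (h' : μ ≠ μ') :
    ∃ σ : Equiv.Perm α, σ m = μ ∧ σ m' = μ' := by
  classical
  have hμc : μ ≠ Equiv.swap m μ m' := by
    intro hc
    have := congrArg (Equiv.swap m μ) hc
    rw [Equiv.swap_apply_right, Equiv.swap_apply_self] at this
    exact h this
  refine ⟨(Equiv.swap m μ).trans (Equiv.swap (Equiv.swap m μ m') μ'), ?_, ?_⟩
  · simp only [Equiv.trans_apply, Equiv.swap_apply_left]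
    exact Equiv.swap_apply_of_ne_of_ne hμc h'
  · simp only [Equiv.trans_apply, Equiv.swap_apply_left]

lemma range_filter_card {Mt Mc : Type} [Fintype Mt] [Fintype Mc] (g : Mt ↪ Mc) :
    (univ.filter (fun x => x ∈ Set.range g)).card = Fintype.card Mt := by
  have : (univ.filter (fun x => x ∈ Set.range g)) = univ.image g := by
    ext x; simp [Set.mem_range, eq_comm]
  rw [this, Finset.card_image_of_injective _ g.injective, Finset.card_univ]

lemma aux_pair_congr {Mt Mc : Type} [Fintype Mt] [Fintype Mc] {m m' μ μ' : Mc}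
    (h : m ≠ m') (h' : μ ≠ μ') :
    (univ.filter (fun g : Mt ↪ Mc => m ∈ Set.range g ∧ m' ∈ Set.range g)).card =
    (univ.filter (fun g : Mt ↪ Mc => μ ∈ Set.range g ∧ μ' ∈ Set.range g)).card := by
  obtain ⟨σ, hσ1, hσ2⟩ := aux_perm h h'
  refine Finset.card_bij' (fun g _ => g.trans σ.toEmbedding)
    (fun g _ => g.trans σ.symm.toEmbedding) ?_ ?_ ?_ ?_
  · intro g hg
    rw [Finset.mem_filter] at hg ⊢
    obtain ⟨-, ⟨a, ha⟩, ⟨b, hb⟩⟩ := hg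
    exact ⟨mem_univ _, ⟨a, by simp [ha, hσ1]⟩, ⟨b, by simp [hb, hσ2]⟩⟩
  · intro g hg
    rw [Finset.mem_filter] at hg ⊢
    obtain ⟨-, ⟨a, ha⟩, ⟨b, hb⟩⟩ := hg
    refine ⟨mem_univ _, ⟨a, ?_⟩, ⟨b, ?_⟩⟩
    · simp only [Function.Embedding.trans_apply, Equiv.coe_toEmbedding, ha, ← hσ1,
        Equiv.symm_apply_apply]
    · simp only [Function.Embedding.trans_apply, Equiv.coe_toEmbedding, hb, ← hσ2,
        Equiv.symm_apply_apply]
  · intro g _; ext a; simp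
  · intro g _; ext a; simp

lemma aux_key_count {Mt Mc : Type} [Fintype Mt] [Fintype Mc] {m m' : Mc} (h : m ≠ m') :
    (univ.filter (fun g : Mt ↪ Mc => m ∈ Set.range g ∧ m' ∈ Set.range g)).card *
      (Fintype.card Mc * Fintype.card Mc - Fintype.card Mc) =
    Fintype.card (Mt ↪ Mc) * (Fintype.card Mt * Fintype.card Mt - Fintype.card Mt) := by
  classical
  have key : ∀ p : Mc × Mc, p ∈ (univ : Finset Mc).offDiag →
      (univ.filter (fun g : Mt ↪ Mc => p.1 ∈ Set.range g ∧ p.2 ∈ Set.range g)).card =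
      (univ.filter (fun g : Mt ↪ Mc => m ∈ Set.range g ∧ m' ∈ Set.range g)).card := by
    intro p hp
    rw [mem_offDiag] at hp
    exact aux_pair_congr hp.2.2 h
  have lhs_eq : ∑ p ∈ (univ : Finset Mc).offDiag,
      (univ.filter (fun g : Mt ↪ Mc => p.1 ∈ Set.range g ∧ p.2 ∈ Set.range g)).card =
      (univ : Finset Mc).offDiag.card *
      (univ.filter (fun g : Mt ↪ Mc => m ∈ Set.range g ∧ m' ∈ Set.range g)).card := by
    rw [Finset.sum_congr rfl key, Finset.sum_const, smul_eq_mul]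
  have rhs_eq : ∑ p ∈ (univ : Finset Mc).offDiag,
      (univ.filter (fun g : Mt ↪ Mc => p.1 ∈ Set.range g ∧ p.2 ∈ Set.range g)).card =
      Fintype.card (Mt ↪ Mc) * (Fintype.card Mt * Fintype.card Mt - Fintype.card Mt) := by
    simp only [Finset.card_filter]
    rw [Finset.sum_comm]
    have inner : ∀ g : Mt ↪ Mc,
        (∑ p ∈ (univ : Finset Mc).offDiag,
          if p.1 ∈ Set.range g ∧ p.2 ∈ Set.range g then 1 else 0) =
        Fintype.card Mt * Fintype.card Mt - Fintype.card Mt := by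
      intro g
      rw [← Finset.card_filter]
      have hset : (univ : Finset Mc).offDiag.filter
            (fun p => p.1 ∈ Set.range g ∧ p.2 ∈ Set.range g) =
          (univ.filter (fun x => x ∈ Set.range g)).offDiag := by
        ext p
        simp only [Finset.mem_filter, Finset.mem_offDiag, Finset.mem_univ, true_and]
        tauto
      rw [hset, Finset.offDiag_card, range_filter_card]
    rw [Finset.sum_congr rfl (fun g _ => inner g), Finset.sum_const, smul_eq_mul,
      Finset.card_univ]
  rw [← rhs_eq, lhs_eq, Finset.offDiag_card, Finset.card_univ, mul_comm]

lemma aux_pair_prob {Mt Mc : Type} [Fintype Mt] [Fintype Mc] (L : ℕ) (hL1 : 1 ≤ L)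
    (hI0 : 0 < Fintype.card (Mt ↪ Mc))
    {m m' : Mc}
    (hBL : ((univ.filter (fun g : Mt ↪ Mc =>
        m ∈ Set.range g ∧ m' ∈ Set.range g)).card : ℝ) * L ≤ Fintype.card (Mt ↪ Mc))
    (c : ℝ) :
    ((univ.filter (fun G : Fin L → Mt ↪ Mc =>
        c < ((univ.filter (fun j =>
          m ∈ Set.range (G j) ∧ m' ∈ Set.range (G j))).card : ℝ))).card : ℝ)
      ≤ Real.exp 1 * (Fintype.card (Mt ↪ Mc) : ℝ) ^ L * (2:ℝ) ^ (-c) := by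
  classical
  set P : (Mt ↪ Mc) → Prop := fun g => m ∈ Set.range g ∧ m' ∈ Set.range g with hP
  set f : (Mt ↪ Mc) → ℝ := fun g => if P g then 2 else 1 with hf
  set I : ℕ := Fintype.card (Mt ↪ Mc) with hIdef
  set B : ℕ := (univ.filter P).card with hBdef
  have hL0 : (0:ℝ) < L := by exact_mod_cast hL1
  -- each term equals 2 ^ count
  have prod_eq : ∀ G : Fin L → Mt ↪ Mc,
      (∏ j, f (G j)) = (2:ℝ) ^ ((univ.filter (fun j => P (G j))).card) := by
    intro G
    rw [hf]
    simp only []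
    rw [Finset.prod_ite (fun _ => (2:ℝ)) (fun _ => (1:ℝ)), Finset.prod_const,
      Finset.prod_const, one_pow, mul_one]
  -- Markov
  have markov :
      ((univ.filter (fun G : Fin L → Mt ↪ Mc =>
        c < ((univ.filter (fun j => P (G j))).card : ℝ))).card : ℝ) * (2:ℝ) ^ c
      ≤ ∑ G : Fin L → Mt ↪ Mc, ∏ j, f (G j) := by
    have h1 : ∀ G ∈ univ.filter (fun G : Fin L → Mt ↪ Mc =>
        c < ((univ.filter (fun j => P (G j))).card : ℝ)),
        (2:ℝ) ^ c ≤ ∏ j, f (G j) := by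
      intro G hG
      rw [Finset.mem_filter] at hG
      rw [prod_eq G]
      calc (2:ℝ) ^ c ≤ (2:ℝ) ^ (((univ.filter (fun j => P (G j))).card : ℝ)) :=
            Real.rpow_le_rpow_of_exponent_le one_le_two hG.2.le
        _ = _ := Real.rpow_natCast 2 _
    calc ((univ.filter (fun G : Fin L → Mt ↪ Mc =>
          c < ((univ.filter (fun j => P (G j))).card : ℝ))).card : ℝ) * (2:ℝ) ^ c
        = ∑ _G ∈ univ.filter (fun G : Fin L → Mt ↪ Mc =>
            c < ((univ.filter (fun j => P (G j))).card : ℝ)), (2:ℝ) ^ c := by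
          rw [Finset.sum_const, nsmul_eq_mul]
      _ ≤ ∑ G ∈ univ.filter (fun G : Fin L → Mt ↪ Mc =>
            c < ((univ.filter (fun j => P (G j))).card : ℝ)), ∏ j, f (G j) :=
          Finset.sum_le_sum h1
      _ ≤ ∑ G : Fin L → Mt ↪ Mc, ∏ j, f (G j) := by
          apply Finset.sum_le_sum_of_subset_of_nonneg (Finset.filter_subset _ _)
          intro G _ _
          rw [prod_eq G]
          positivity
  -- factorize
  have sum_eq : ∑ G : Fin L → Mt ↪ Mc, ∏ j, f (G j) = ((I:ℝ) + B) ^ L := by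
    rw [← Fintype.sum_pow f L]
    congr 1
    rw [hf]
    simp only []
    rw [Finset.sum_ite (fun _ => (2:ℝ)) (fun _ => (1:ℝ)), Finset.sum_const,
      Finset.sum_const, nsmul_eq_mul, nsmul_eq_mul, mul_one]
    have hsplit : (univ.filter P).card + (univ.filter (fun g => ¬ P g)).card = I :=
      Finset.card_filter_add_card_filter_not _
    have : ((univ.filter (fun g => ¬ P g)).card : ℝ) = (I:ℝ) - B := by
      rw [hBdef]
      have := congrArg (fun x : ℕ => (x:ℝ)) hsplit
      push_cast at this
      linarith
    rw [this]
    ring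
  -- Chernoff-style bound
  have chern : ((I:ℝ) + B) ^ L ≤ Real.exp 1 * (I:ℝ) ^ L := by
    have hB_le : (B:ℝ) ≤ (I:ℝ) / L := by
      rw [le_div_iff₀ hL0]
      exact hBL
    have h1 : (I:ℝ) + B ≤ (I:ℝ) * Real.exp (1 / L) := by
      have : (I:ℝ) + B ≤ (I:ℝ) * (1 + 1/L) := by
        have hIL : (I:ℝ)/L = (I:ℝ) * (1/L) := by ring
        nlinarith
      refine this.trans ?_
      have := Real.add_one_le_exp (1/(L:ℝ))
      have hI0' : (0:ℝ) ≤ I := Nat.cast_nonneg I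
      nlinarith
    calc ((I:ℝ) + B) ^ L ≤ ((I:ℝ) * Real.exp (1 / L)) ^ L := by
          apply pow_le_pow_left₀ (by positivity) h1
      _ = (I:ℝ) ^ L * Real.exp (1/L) ^ L := mul_pow _ _ _
      _ = (I:ℝ) ^ L * Real.exp ((L:ℝ) * (1/L)) := by rw [← Real.exp_nat_mul]
      _ = Real.exp 1 * (I:ℝ) ^ L := by
          rw [mul_one_div_cancel (ne_of_gt hL0), mul_comm]
  -- combine
  have h2c : (0:ℝ) < (2:ℝ) ^ c := Real.rpow_pos_of_pos two_pos c
  rw [Real.rpow_neg (by norm_num : (0:ℝ) ≤ 2), ← div_eq_mul_inv, le_div_iff₀ h2c]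
  exact markov.trans (le_of_eq_of_le sum_eq chern)

lemma aux_final (n : ℕ) (hn : 0 < n) (r : ℝ) (hr : 0 ≤ r) :
    ((2:ℝ) ^ ((n:ℝ) * r)) ^ 2 *
      (Real.exp 1 * (2:ℝ) ^ (-(((4*r+2) * Real.log 2 / (2*Real.log 2 - 1)) * (n:ℝ)))) ≤
    (Real.exp 1)⁻¹ * (2:ℝ) ^ (-2 * ((n:ℝ) * (r+1) - 1)) := by
  have hg1 : (0.6931471803:ℝ) < Real.log 2 := Real.log_two_gt_d9
  have hg2 : Real.log 2 < 0.6931471808 := Real.log_two_lt_d9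
  set g := Real.log 2 with hg
  have h2g : (0:ℝ) < 2*g - 1 := by nlinarith
  set c : ℝ := (4*r+2) * g / (2*g - 1) * n with hcdef
  have hn1 : (1:ℝ) ≤ n := by exact_mod_cast hn
  set u : ℝ := (4*r+2) * n with hudef
  have hu : (2:ℝ) ≤ u := by nlinarith
  have hcu : c * (2*g - 1) = u * g := by
    rw [hcdef, hudef]
    field_simp
  -- rewrite LHS
  have lhs_eq : ((2:ℝ) ^ ((n:ℝ) * r)) ^ 2 *
      (Real.exp 1 * (2:ℝ) ^ (-c)) = Real.exp (1 + g * (2*(n:ℝ)*r - c)) := by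
    rw [← Real.rpow_natCast ((2:ℝ) ^ ((n:ℝ) * r)) 2, ← Real.rpow_mul (by norm_num),
      Real.rpow_def_of_pos (by norm_num), Real.rpow_def_of_pos (by norm_num),
      ← Real.exp_add, ← Real.exp_add, ← hg]
    congr 1
    push_cast
    ring
  have rhs_eq : (Real.exp 1)⁻¹ * (2:ℝ) ^ (-2 * ((n:ℝ) * (r+1) - 1)) =
      Real.exp (-1 + g * (-2 * ((n:ℝ) * (r+1) - 1))) := by
    rw [← Real.exp_neg, Real.rpow_def_of_pos (by norm_num), ← Real.exp_add, ← hg]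
  rw [lhs_eq, rhs_eq, Real.exp_le_exp]
  -- linear goal : 1 + g*(2nr - c) ≤ -1 + g*(-2*(n*(r+1)-1))
  have key : 2 * (2*g-1) ≤ g * (2 - u + c) * (2*g-1) := by
    have expand : g * (2 - u + c) * (2*g-1) = g*(2-u)*(2*g-1) + g*(c*(2*g-1)) := by ring
    rw [expand, hcu]
    nlinarith [mul_nonneg (mul_nonneg (sub_nonneg.2 hu) (by nlinarith : (0:ℝ) ≤ g))
        (by nlinarith : (0:ℝ) ≤ 1 - g), sq_nonneg (1 - g)]
  have key2 : 2 ≤ g * (2 - u + c) := le_of_mul_le_mul_right (by nlinarith [key]) h2g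
  nlinarith [key2]

lemma card_subtype_filter {α : Type} [Fintype α] (p : α → Prop) [DecidablePred p] :
    Nat.card {x // p x} = (univ.filter p).card := by
  classical
  rw [Nat.card_eq_fintype_card]
  convert Fintype.card_subtype p


lemma aux_BL {Mt Mc : Type} [Fintype Mt] [Fintype Mc] (L : ℕ) {m m' : Mc} (h : m ≠ m')
    (hM1 : 1 ≤ Fintype.card Mt)
    (hMN : Fintype.card Mt ≤ Fintype.card Mc)
    (hLM : (L:ℝ) * (Fintype.card Mt : ℝ)^2 = (Fintype.card Mc : ℝ)^2) :
    ((univ.filter (fun g : Mt ↪ Mc =>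
        m ∈ Set.range g ∧ m' ∈ Set.range g)).card : ℝ) * L ≤ Fintype.card (Mt ↪ Mc) := by
  classical
  have hN2 : 2 ≤ Fintype.card Mc := Fintype.one_lt_card_iff_nontrivial.mpr ⟨⟨m, m', h⟩⟩
  have hkey := aux_key_count (Mt := Mt) (Mc := Mc) h
  set B : ℕ := (univ.filter (fun g : Mt ↪ Mc => m ∈ Set.range g ∧ m' ∈ Set.range g)).card
  set I : ℕ := Fintype.card (Mt ↪ Mc)
  set N : ℕ := Fintype.card Mc
  set M : ℕ := Fintype.card Mt
  have hNN : N ≤ N * N := Nat.le_mul_of_pos_left N (by omega)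
  have hMM : M ≤ M * M := Nat.le_mul_of_pos_left M (by omega)
  have hcast : (B:ℝ) * ((N:ℝ)*N - N) = (I:ℝ) * ((M:ℝ)*M - M) := by
    have := congrArg (fun x : ℕ => (x:ℝ)) hkey
    push_cast [Nat.cast_sub hNN, Nat.cast_sub hMM] at this
    convert this using 1 <;> ring
  have hN2' : (2:ℝ) ≤ N := by exact_mod_cast hN2
  have hM1' : (1:ℝ) ≤ M := by exact_mod_cast hM1
  have hMN' : (M:ℝ) ≤ N := by exact_mod_cast hMN
  have hI0' : (0:ℝ) ≤ I := Nat.cast_nonneg I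
  have hB0' : (0:ℝ) ≤ B := Nat.cast_nonneg B
  have e1 : (B:ℝ)*N*((N:ℝ)-1) = (I:ℝ)*M*((M:ℝ)-1) := by linear_combination hcast
  have e2 : (I:ℝ)*M*((M:ℝ)-1) ≤ (I:ℝ)*M*((N:ℝ)-1) :=
    mul_le_mul_of_nonneg_left (by linarith) (by positivity)
  have h1 : (B:ℝ)*N ≤ (I:ℝ)*M :=
    le_of_mul_le_mul_right (by linarith) (by linarith : (0:ℝ) < (N:ℝ)-1)
  have h2 : (B:ℝ)*(N:ℝ)^2 ≤ (I:ℝ)*(M:ℝ)^2 := by nlinarith [e1, h1]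
  have h3 : ((B:ℝ)*L) * (M:ℝ)^2 ≤ (I:ℝ)*(M:ℝ)^2 := by
    calc ((B:ℝ)*L) * (M:ℝ)^2 = (B:ℝ)*((L:ℝ)*(M:ℝ)^2) := by ring
      _ = (B:ℝ)*(N:ℝ)^2 := by rw [hLM]
      _ ≤ (I:ℝ)*(M:ℝ)^2 := h2
  exact le_of_mul_le_mul_right h3 (by nlinarith : (0:ℝ) < (M:ℝ)^2)

/-- Appendix `app:sims:g*`: for independent uniformly random
injections `G₁, …, G_L : ℳ̃ ↪ ℳ` with `|ℳ̃| = M = 2^{n(r−β)}`, `|ℳ| = N = 2^{nr}`,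
`L = 2^{2nβ}`, and `γ = (4r+2)·ln 2/(2 ln 2 − 1)`, the probability (under the
uniform distribution on tuples of injections) that some pair of distinct
`m, m' ∈ ℳ` lies in more than `γn` of the ranges is at most
`e^{−1}·2^{−2(n(r+1)−1)}`. -/
theorem statement18 (n : ℕ) (hn : 0 < n) (r β : ℝ) (hβ : 0 ≤ β) (hrβ : β ≤ r)
    (N M L : ℕ)
    (hN : (N : ℝ) = (2 : ℝ) ^ ((n : ℝ) * r))
    (hM : (M : ℝ) = (2 : ℝ) ^ ((n : ℝ) * (r - β)))
    (hL : (L : ℝ) = (2 : ℝ) ^ (2 * (n : ℝ) * β))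
    (hMN : M ≤ N)
    {Mt Mc : Type} [Fintype Mt] [Fintype Mc]
    (hcardMt : Fintype.card Mt = M) (hcardMc : Fintype.card Mc = N) :
    (Nat.card {G : Fin L → (Mt ↪ Mc) //
        ∃ m m' : Mc, m ≠ m' ∧
          ((4 * r + 2) * Real.log 2 / (2 * Real.log 2 - 1)) * n <
            (Nat.card {j : Fin L // m ∈ Set.range (G j) ∧ m' ∈ Set.range (G j)} : ℝ)} : ℝ)
      / (Nat.card (Fin L → (Mt ↪ Mc)))
      ≤ (Real.exp 1)⁻¹ * (2 : ℝ) ^ (-2 * ((n : ℝ) * (r + 1) - 1)) := by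
  classical
  have hr : 0 ≤ r := hβ.trans hrβ
  set c : ℝ := (4 * r + 2) * Real.log 2 / (2 * Real.log 2 - 1) * (n:ℝ) with hcdef
  have hL0 : (0:ℝ) < L := hL ▸ Real.rpow_pos_of_pos two_pos _
  have hM0 : (0:ℝ) < M := hM ▸ Real.rpow_pos_of_pos two_pos _
  have hLpos : 0 < L := by exact_mod_cast hL0
  have hL1 : 1 ≤ L := hLpos
  have hM1 : 1 ≤ M := by exact_mod_cast hM0
  have hMN' : Fintype.card Mt ≤ Fintype.card Mc := by rw [hcardMt, hcardMc]; exact hMN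
  have hM1' : 1 ≤ Fintype.card Mt := hcardMt ▸ hM1
  have hI0 : 0 < Fintype.card (Mt ↪ Mc) :=
    Fintype.card_pos_iff.mpr (Function.Embedding.nonempty_of_card_le hMN')
  set I : ℕ := Fintype.card (Mt ↪ Mc) with hIdef
  have hLM : (L:ℝ) * (Fintype.card Mt : ℝ)^2 = (Fintype.card Mc : ℝ)^2 := by
    rw [hcardMt, hcardMc, hM, hN, hL]
    rw [← Real.rpow_natCast ((2:ℝ) ^ ((n:ℝ) * (r - β))) 2,
      ← Real.rpow_natCast ((2:ℝ) ^ ((n:ℝ) * r)) 2,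
      ← Real.rpow_mul (by norm_num), ← Real.rpow_mul (by norm_num),
      ← Real.rpow_add two_pos]
    congr 1
    push_cast
    ring
  -- rewrite goal into Finset.card form
  simp only [card_subtype_filter]
  have hdenom : (Nat.card (Fin L → (Mt ↪ Mc)) : ℝ) = (I:ℝ) ^ L := by
    rw [Nat.card_fun]
    simp [Nat.card_eq_fintype_card, hIdef]
  rw [hdenom]
  have hIL0 : (0:ℝ) < (I:ℝ) ^ L := by positivity
  rw [div_le_iff₀ hIL0]
  -- union bound
  set badset := univ.filter (fun G : Fin L → Mt ↪ Mc =>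
      ∃ m m' : Mc, m ≠ m' ∧ c < ((univ.filter (fun j =>
        m ∈ Set.range (G j) ∧ m' ∈ Set.range (G j))).card : ℝ)) with hbadset
  have hsub : badset ⊆ (univ : Finset Mc).offDiag.biUnion (fun p =>
      univ.filter (fun G : Fin L → Mt ↪ Mc =>
        c < ((univ.filter (fun j =>
          p.1 ∈ Set.range (G j) ∧ p.2 ∈ Set.range (G j))).card : ℝ))) := by
    intro G hG
    rw [hbadset, Finset.mem_filter] at hG
    obtain ⟨-, m, m', hmm, hlt⟩ := hG
    rw [Finset.mem_biUnion]
    exact ⟨(m, m'), Finset.mem_offDiag.mpr ⟨mem_univ _, mem_univ _, hmm⟩,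
      Finset.mem_filter.mpr ⟨mem_univ _, hlt⟩⟩
  have card_le : (badset.card : ℝ) ≤
      ((Fintype.card Mc : ℝ))^2 * (Real.exp 1 * (I:ℝ)^L * (2:ℝ)^(-c)) := by
    have step1 : badset.card ≤ ∑ p ∈ (univ : Finset Mc).offDiag,
        (univ.filter (fun G : Fin L → Mt ↪ Mc =>
          c < ((univ.filter (fun j =>
            p.1 ∈ Set.range (G j) ∧ p.2 ∈ Set.range (G j))).card : ℝ))).card :=
      (Finset.card_le_card hsub).trans (Finset.card_biUnion_le)
    have step2 : ∀ p ∈ (univ : Finset Mc).offDiag,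
        ((univ.filter (fun G : Fin L → Mt ↪ Mc =>
          c < ((univ.filter (fun j =>
            p.1 ∈ Set.range (G j) ∧ p.2 ∈ Set.range (G j))).card : ℝ))).card : ℝ)
        ≤ Real.exp 1 * (I:ℝ)^L * (2:ℝ)^(-c) := by
      intro p hp
      rw [Finset.mem_offDiag] at hp
      exact aux_pair_prob L hL1 hI0 (aux_BL L hp.2.2 hM1' hMN' hLM) c
    calc (badset.card : ℝ) ≤ ∑ p ∈ (univ : Finset Mc).offDiag,
          ((univ.filter (fun G : Fin L → Mt ↪ Mc =>
            c < ((univ.filter (fun j =>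
              p.1 ∈ Set.range (G j) ∧ p.2 ∈ Set.range (G j))).card : ℝ))).card : ℝ) := by
          exact_mod_cast step1
      _ ≤ ∑ _p ∈ (univ : Finset Mc).offDiag, Real.exp 1 * (I:ℝ)^L * (2:ℝ)^(-c) :=
          Finset.sum_le_sum step2
      _ = ((univ : Finset Mc).offDiag.card : ℝ) * (Real.exp 1 * (I:ℝ)^L * (2:ℝ)^(-c)) := by
          rw [Finset.sum_const, nsmul_eq_mul]
      _ ≤ ((Fintype.card Mc : ℝ))^2 * (Real.exp 1 * (I:ℝ)^L * (2:ℝ)^(-c)) := by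
          apply mul_le_mul_of_nonneg_right _ (by positivity)
          rw [Finset.offDiag_card, Finset.card_univ]
          have h1 : (Fintype.card Mc * Fintype.card Mc - Fintype.card Mc : ℕ)
              ≤ Fintype.card Mc * Fintype.card Mc := Nat.sub_le _ _
          calc ((Fintype.card Mc * Fintype.card Mc - Fintype.card Mc : ℕ) : ℝ)
              ≤ ((Fintype.card Mc * Fintype.card Mc : ℕ) : ℝ) := by exact_mod_cast h1
            _ = ((Fintype.card Mc : ℝ))^2 := by push_cast; ring
  refine card_le.trans ?_
  have final := aux_final n hn r hr
  rw [hcardMc, hN]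
  calc ((2:ℝ) ^ ((n:ℝ) * r))^2 * (Real.exp 1 * (I:ℝ)^L * (2:ℝ)^(-c))
      = (((2:ℝ) ^ ((n:ℝ) * r))^2 * (Real.exp 1 * (2:ℝ)^(-c))) * (I:ℝ)^L := by ring
    _ ≤ ((Real.exp 1)⁻¹ * (2:ℝ) ^ (-2 * ((n:ℝ) * (r+1) - 1))) * (I:ℝ)^L := by
        apply mul_le_mul_of_nonneg_right _ (by positivity)
        exact final
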